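/- arXiv:1904.05870 — 4 statements merged into one kernel-verified Lean document; each statement's English description precedes it below -/
import Mathlib

section
/- Let f : F_q^{ℓ+m} → F_q be a polynomial of total degree at most d which is not exactly linear in the first ℓ variables x (i.e., f cannot be written as Σ_{i=1}^{ℓ} x_i·f_i(y) for polynomials f_i in the last m variables y). Then the probability over uniformly random y ∈ F_q^m that the restricted polynomial x ↦ f(x,y) is exactly linear (a homogeneous linear form Σ_i c_i x_i) is at most d/q. -/
/-- The restriction `f|_y : x ↦ f(x, y)` of a polynomial in variables `x ⊕ y` obtained by
substituting the point `y` for the last block of variables. -/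
noncomputable def restrictY {F : Type*} [CommSemiring F] {l m : ℕ}
    (f : MvPolynomial (Fin l ⊕ Fin m) F) (y : Fin m → F) : MvPolynomial (Fin l) F :=
  MvPolynomial.aeval (Sum.elim MvPolynomial.X fun j => MvPolynomial.C (y j)) f

/-- `f(x, y)` is exactly linear in the `x`-variables: `f = Σ_i x_i · f_i(y)`. -/
def ExactlyLinearInX {F : Type*} [CommSemiring F] {l m : ℕ}
    (f : MvPolynomial (Fin l ⊕ Fin m) F) : Prop :=
  ∃ g : Fin l → MvPolynomial (Fin m) F,
    f = ∑ i, MvPolynomial.X (Sum.inl i) * MvPolynomial.rename Sum.inr (g i)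

/-- A polynomial in the `x`-variables is exactly linear: a homogeneous linear form
`Σ_i c_i x_i` with no constant term. -/
def ExactlyLinear {F : Type*} [CommSemiring F] {l : ℕ}
    (f : MvPolynomial (Fin l) F) : Prop :=
  ∃ c : Fin l → F, f = ∑ i, MvPolynomial.C (c i) * MvPolynomial.X i

section Auxiliary

open MvPolynomial Finset

attribute [local instance] Classical.propDecidable

/-- The Schwartz–Zippel lemma for finite fields, in the form
`#zeros * q ≤ deg * q^m`. -/
lemma SZ_aux {F : Type*} [Field F] [Fintype F] :
    ∀ (m : ℕ) (h : MvPolynomial (Fin m) F), h ≠ 0 →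
    (Finset.univ.filter fun y : Fin m → F => eval y h = 0).card * Fintype.card F ≤
      h.totalDegree * Fintype.card F ^ m := by
  classical
  intro m
  induction m with
  | zero =>
    intro h h0
    obtain ⟨a, rfl⟩ := MvPolynomial.C_surjective (Fin 0) h
    have ha : a ≠ 0 := fun haz => h0 (by rw [haz, map_zero])
    simp [ha]
  | succ m ih =>
    intro h h0
    set Q := Fintype.card F with hQ
    set p := finSuccEquiv F m h with hp
    have hp0 : p ≠ 0 := by
      rw [hp]
      exact (map_ne_zero_iff _ (AlgEquiv.injective _)).mpr h0
    set n := p.natDegree with hn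
    set c := p.coeff n with hc
    have hc0 : c ≠ 0 := by
      rw [hc, hn]
      exact Polynomial.leadingCoeff_ne_zero.mpr hp0
    have hdc : c.totalDegree + n ≤ h.totalDegree := by
      rw [hc]
      exact totalDegree_coeff_finSuccEquiv_add_le h n hc0
    -- fiberwise count
    have hcard : (Finset.univ.filter fun y : Fin (m+1) → F => eval y h = 0).card
        = ∑ y' : Fin m → F, (Finset.univ.filter fun y0 : F => eval (Fin.cons y0 y') h = 0).card := by
      rw [Finset.card_eq_sum_card_fiberwise
        (f := fun y : Fin (m+1) → F => Fin.tail y) (t := Finset.univ) (fun x _ => Finset.mem_univ _)]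
      refine Finset.sum_congr rfl fun y' _ => ?_
      refine Finset.card_bij' (fun y _ => y 0) (fun y0 _ => Fin.cons y0 y') ?_ ?_ ?_ ?_
      · intro y hy
        simp only [Finset.mem_filter, Finset.mem_univ, true_and] at hy ⊢
        obtain ⟨h1, h2⟩ := hy
        rwa [← h2, Fin.cons_self_tail]
      · intro y0 hy0
        simp only [Finset.mem_filter, Finset.mem_univ, true_and] at hy0 ⊢
        exact ⟨hy0, Fin.tail_cons _ _⟩
      · intro y hy
        simp only [Finset.mem_filter, Finset.mem_univ, true_and] at hy
        funext i
        refine Fin.cases ?_ ?_ i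
        · simp
        · intro j
          simp [← hy.2, Fin.tail]
      · intro y0 hy0
        simp
    -- per-fiber bound
    have key : ∀ y' : Fin m → F,
        (Finset.univ.filter fun y0 : F => eval (Fin.cons y0 y') h = 0).card
          ≤ if eval y' c = 0 then Q else n := by
      intro y'
      split_ifs with hbad
      · exact (Finset.card_filter_le _ _).trans (by simp [hQ])
      · set q := Polynomial.map (MvPolynomial.eval y') p with hq
        have hlc : MvPolynomial.eval y' p.leadingCoeff ≠ 0 := by
          rwa [Polynomial.leadingCoeff, ← hn, ← hc]
        have hq0 : q ≠ 0 := fun hq' => by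
          apply hbad
          have := congrArg (fun r => Polynomial.coeff r n) hq'
          simpa [hq, Polynomial.coeff_map, ← hc] using this
        have hqdeg : q.natDegree = n := by
          rw [hq]
          exact Polynomial.natDegree_map_of_leadingCoeff_ne_zero _ hlc
        rw [← hqdeg]
        apply Polynomial.card_le_degree_of_subset_roots
        intro y0 hy0
        rw [Finset.mem_val, Finset.mem_filter] at hy0
        rw [Polynomial.mem_roots hq0]
        rw [Polynomial.IsRoot, hq, ← eval_eq_eval_mv_eval']
        exact hy0.2
    -- combine
    have hsum : ∑ y' : Fin m → F, (Finset.univ.filter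
          fun y0 : F => eval (Fin.cons y0 y') h = 0).card
        ≤ (Finset.univ.filter fun y' : Fin m → F => eval y' c = 0).card * Q + Q ^ m * n := by
      calc ∑ y' : Fin m → F, (Finset.univ.filter fun y0 : F => eval (Fin.cons y0 y') h = 0).card
          ≤ ∑ y' : Fin m → F, if eval y' c = 0 then Q else n :=
            Finset.sum_le_sum fun y' _ => key y'
        _ = (Finset.univ.filter fun y' : Fin m → F => eval y' c = 0).card * Q
            + (Finset.univ.filter fun y' : Fin m → F => ¬ eval y' c = 0).card * n := by
            rw [Finset.sum_ite, Finset.sum_const, Finset.sum_const, smul_eq_mul, smul_eq_mul]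
        _ ≤ _ := by
            gcongr
            calc (Finset.univ.filter fun y' : Fin m → F => ¬ eval y' c = 0).card
                ≤ (Finset.univ : Finset (Fin m → F)).card := Finset.card_filter_le _ _
              _ = Q ^ m := by simp [hQ, Fintype.card_fun]
    have hihc := ih c hc0
    calc (Finset.univ.filter fun y : Fin (m+1) → F => eval y h = 0).card * Q
        ≤ ((Finset.univ.filter fun y' : Fin m → F => eval y' c = 0).card * Q + Q ^ m * n) * Q := by
          rw [hcard]; exact Nat.mul_le_mul_right Q hsum
      _ = ((Finset.univ.filter fun y' : Fin m → F => eval y' c = 0).card * Q) * Q + n * Q ^ (m+1) := by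
          ring
      _ ≤ (c.totalDegree * Q ^ m) * Q + n * Q ^ (m+1) :=
          Nat.add_le_add_right (Nat.mul_le_mul_right Q hihc) _
      _ = (c.totalDegree + n) * Q ^ (m+1) := by ring
      _ ≤ h.totalDegree * Q ^ (m+1) := Nat.mul_le_mul_right _ hdc

lemma sumElim_eq_zero_iff {S T : Type*} (α : S →₀ ℕ) (β : T →₀ ℕ) :
    Finsupp.sumElim α β = 0 ↔ α = 0 ∧ β = 0 := by
  constructor
  · intro h
    constructor <;> ext x
    · simpa using DFunLike.congr_fun h (Sum.inl x)
    · simpa using DFunLike.congr_fun h (Sum.inr x)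
  · rintro ⟨rfl, rfl⟩
    ext (x|x) <;> simp

lemma sumElim_sub_single_inl {S T : Type*} (α : S →₀ ℕ) (β : T →₀ ℕ) (i : S) :
    Finsupp.sumElim α β - Finsupp.single (Sum.inl i) 1
      = Finsupp.sumElim (α - Finsupp.single i 1) β := by
  ext (x|x) <;> simp [Finsupp.tsub_apply, Finsupp.single_apply, Sum.inl.injEq]

lemma sumElim_sub_single_inr {S T : Type*} (α : S →₀ ℕ) (β : T →₀ ℕ) (j : T) :
    Finsupp.sumElim α β - Finsupp.single (Sum.inr j) 1
      = Finsupp.sumElim α (β - Finsupp.single j 1) := by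
  ext (x|x) <;> simp [Finsupp.tsub_apply, Finsupp.single_apply, Sum.inr.injEq]

lemma coeff_coeff_sumToIter {R : Type*} [CommSemiring R] {S T : Type*}
    (f : MvPolynomial (S ⊕ T) R) (α : S →₀ ℕ) (β : T →₀ ℕ) :
    coeff β (coeff α (sumToIter R S T f)) = coeff (Finsupp.sumElim α β) f := by
  induction f using MvPolynomial.induction_on generalizing α β with
  | C a =>
    rw [sumToIter_C, coeff_C, coeff_C]
    by_cases h1 : α = 0 <;> by_cases h2 : β = 0 <;>
      simp [h1, h2, coeff_C, eq_comm, sumElim_eq_zero_iff]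
  | add p q hp hq =>
    simp [map_add, coeff_add, hp, hq]
  | mul_X p s hp =>
    cases s with
    | inl i =>
      rw [map_mul, sumToIter_Xl, coeff_mul_X', coeff_mul_X']
      have hmem : Sum.inl i ∈ (Finsupp.sumElim α β).support ↔ i ∈ α.support := by
        simp [Finsupp.mem_support_iff]
      by_cases h1 : i ∈ α.support
      · rw [if_pos h1, if_pos (hmem.mpr h1), hp, sumElim_sub_single_inl]
      · rw [if_neg h1, if_neg (fun h => h1 (hmem.mp h)), coeff_zero]
    | inr j =>
      rw [map_mul, sumToIter_Xr]
      rw [mul_comm ((sumToIter R S T) p) (MvPolynomial.C (X j)), coeff_C_mul]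
      rw [mul_comm (X j) (coeff α ((sumToIter R S T) p)), coeff_mul_X']
      rw [coeff_mul_X']
      have hmem : Sum.inr j ∈ (Finsupp.sumElim α β).support ↔ j ∈ β.support := by
        simp [Finsupp.mem_support_iff]
      by_cases h1 : j ∈ β.support
      · rw [if_pos h1, if_pos (hmem.mpr h1), hp, sumElim_sub_single_inr]
      · rw [if_neg h1, if_neg (fun h => h1 (hmem.mp h))]

lemma sum_le_sumElim {S T : Type*} (α : S →₀ ℕ) (β : T →₀ ℕ) :
    (β.sum fun _ n => n) ≤ (Finsupp.sumElim α β).sum fun _ n => n := by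
  rw [Finsupp.sum, Finsupp.sum]
  have hsub : β.support.map ⟨Sum.inr, Sum.inr_injective⟩ ⊆ (Finsupp.sumElim α β).support := by
    intro x hx
    simp only [Finset.mem_map, Function.Embedding.coeFn_mk] at hx
    obtain ⟨b, hb, rfl⟩ := hx
    simpa [Finsupp.mem_support_iff] using Finsupp.mem_support_iff.mp hb
  calc ∑ b ∈ β.support, β b
      = ∑ x ∈ β.support.map ⟨Sum.inr, Sum.inr_injective⟩, Finsupp.sumElim α β x := by
        rw [Finset.sum_map]; simp
    _ ≤ ∑ x ∈ (Finsupp.sumElim α β).support, Finsupp.sumElim α β x :=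
        Finset.sum_le_sum_of_subset hsub

lemma sumToIter_rename_inr {R S T : Type*} [CommSemiring R] (g : MvPolynomial T R) :
    MvPolynomial.sumToIter R S T (MvPolynomial.rename Sum.inr g) = MvPolynomial.C g := by
  induction g using MvPolynomial.induction_on with
  | C a => simp [sumToIter_C]
  | add p q hp hq => simp [map_add, hp, hq]
  | mul_X p s hp => simp [map_mul, hp, sumToIter_Xr]

lemma sumToIter_injective (R S T : Type*) [CommSemiring R] :
    Function.Injective (MvPolynomial.sumToIter R S T) := by
  intro a b hab
  apply (MvPolynomial.sumRingEquiv R S T).injective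
  have : ∀ g, MvPolynomial.sumRingEquiv R S T g = MvPolynomial.sumToIter R S T g := fun g =>
    DFunLike.congr_fun (MvPolynomial.ringHom_ext (f := (MvPolynomial.sumRingEquiv R S T).toRingHom)
      (g := MvPolynomial.sumToIter R S T) (fun a => by simp [sumToIter_C])
      (fun i => by cases i <;> simp [sumToIter_Xl, sumToIter_Xr])) g
  rw [this, this, hab]

lemma coeff_linear_of_ne {R : Type*} [CommSemiring R] {l : ℕ} (c : Fin l → R) {α : Fin l →₀ ℕ}
    (hα : ∀ i, α ≠ Finsupp.single i 1) :
    MvPolynomial.coeff α (∑ i, MvPolynomial.C (c i) * MvPolynomial.X i) = 0 := by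
  rw [MvPolynomial.coeff_sum]
  refine Finset.sum_eq_zero fun i _ => ?_
  rw [MvPolynomial.coeff_C_mul, MvPolynomial.coeff_X', if_neg fun h => hα i h.symm, mul_zero]

lemma coeff_linear_single {R : Type*} [CommSemiring R] {l : ℕ} (c : Fin l → R) (i : Fin l) :
    MvPolynomial.coeff (Finsupp.single i 1)
      (∑ j, MvPolynomial.C (c j) * MvPolynomial.X j) = c i := by
  rw [MvPolynomial.coeff_sum, Finset.sum_eq_single i]
  · simp [MvPolynomial.coeff_C_mul, MvPolynomial.coeff_X']
  · intro j _ hj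
    rw [MvPolynomial.coeff_C_mul, MvPolynomial.coeff_X', if_neg, mul_zero]
    intro hs
    exact hj (Finsupp.single_left_injective one_ne_zero hs)
  · simp

lemma eq_linear_of_coeff {R : Type*} [CommSemiring R] {l : ℕ} {p : MvPolynomial (Fin l) R}
    (h : ∀ α : Fin l →₀ ℕ, (∀ i, α ≠ Finsupp.single i 1) → MvPolynomial.coeff α p = 0) :
    p = ∑ i, MvPolynomial.C (MvPolynomial.coeff (Finsupp.single i 1) p) * MvPolynomial.X i := by
  apply MvPolynomial.ext
  intro α
  by_cases hα : ∃ i, α = Finsupp.single i 1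
  · obtain ⟨i, rfl⟩ := hα
    rw [coeff_linear_single]
  · push_neg at hα
    rw [h α hα, coeff_linear_of_ne _ hα]

lemma restrictY_eq_map {F : Type*} [CommSemiring F] {l m : ℕ}
    (f : MvPolynomial (Fin l ⊕ Fin m) F) (y : Fin m → F) :
    restrictY f y
      = MvPolynomial.map (MvPolynomial.eval y) (MvPolynomial.sumToIter F (Fin l) (Fin m) f) := by
  have hcomp : ((MvPolynomial.map (MvPolynomial.eval y)).comp
        (MvPolynomial.sumToIter F (Fin l) (Fin m)))
      = (MvPolynomial.aeval (Sum.elim MvPolynomial.X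
          fun j => MvPolynomial.C (y j)) : MvPolynomial (Fin l ⊕ Fin m) F →ₐ[F] _).toRingHom := by
    apply MvPolynomial.ringHom_ext
    · intro a
      simp [sumToIter_C]
    · rintro (i|j) <;> simp [sumToIter_Xl, sumToIter_Xr]
  exact (DFunLike.congr_fun hcomp f).symm

end Auxiliary

open Classical in
/-- If `f : F_q^{ℓ+m} → F_q` has total degree at most `d` and is not
exactly linear in the first `ℓ` variables, then the fraction of `y ∈ F_q^m` for which the
restriction `x ↦ f(x,y)` is exactly linear is at most `d/q`. -/
theorem not_exactly_linear_restriction {F : Type*} [Field F] [Fintype F] {l m d : ℕ}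
    (f : MvPolynomial (Fin l ⊕ Fin m) F) (hd : f.totalDegree ≤ d)
    (hf : ¬ ExactlyLinearInX f) :
    ((Finset.univ.filter fun y : Fin m → F => ExactlyLinear (restrictY f y)).card : ℝ) /
      (Fintype.card (Fin m → F) : ℝ) ≤ (d : ℝ) / (Fintype.card F : ℝ) := by
  classical
  set P := MvPolynomial.sumToIter F (Fin l) (Fin m) f with hP
  -- a witness of non-linearity in the coefficients of `P`
  have hwit : ∃ α : Fin l →₀ ℕ,
      (∀ i, α ≠ Finsupp.single i 1) ∧ MvPolynomial.coeff α P ≠ 0 := by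
    by_contra hcon
    push_neg at hcon
    apply hf
    refine ⟨fun i => MvPolynomial.coeff (Finsupp.single i 1) P, ?_⟩
    apply sumToIter_injective F (Fin l) (Fin m)
    rw [map_sum]
    simp only [map_mul, MvPolynomial.sumToIter_Xl, sumToIter_rename_inr]
    have h1 := eq_linear_of_coeff (p := P) (fun α hα => hcon α hα)
    exact h1.trans (Finset.sum_congr rfl fun i _ => mul_comm _ _)
  obtain ⟨α, hαlin, hα0⟩ := hwit
  -- degree bound on the coefficient polynomial
  have hdeg : (MvPolynomial.coeff α P).totalDegree ≤ d := by
    rw [MvPolynomial.totalDegree]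
    refine Finset.sup_le fun β hβ => ?_
    have hβf : Finsupp.sumElim α β ∈ f.support := by
      rw [MvPolynomial.mem_support_iff, ← coeff_coeff_sumToIter]
      exact MvPolynomial.mem_support_iff.mp hβ
    exact le_trans (le_trans (sum_le_sumElim α β) (MvPolynomial.le_totalDegree hβf)) hd
  -- exact linearity of the restriction forces vanishing of that coefficient
  have hsubset : (Finset.univ.filter fun y : Fin m → F => ExactlyLinear (restrictY f y))
      ⊆ Finset.univ.filter fun y : Fin m → F =>
          MvPolynomial.eval y (MvPolynomial.coeff α P) = 0 := by
    intro y hy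
    simp only [Finset.mem_filter, Finset.mem_univ, true_and] at hy ⊢
    obtain ⟨c, hc⟩ := hy
    have hco := congrArg (MvPolynomial.coeff α) hc
    rw [restrictY_eq_map, MvPolynomial.coeff_map, coeff_linear_of_ne c hαlin] at hco
    exact hco
  have hsz := SZ_aux m (MvPolynomial.coeff α P) hα0
  have hcard := Finset.card_le_card hsubset
  rw [div_le_div_iff₀ (by exact_mod_cast Fintype.card_pos) (by exact_mod_cast Fintype.card_pos)]
  have hn : (Finset.univ.filter fun y : Fin m → F =>
        ExactlyLinear (restrictY f y)).card * Fintype.card F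
      ≤ d * Fintype.card (Fin m → F) := by
    calc (Finset.univ.filter fun y : Fin m → F =>
          ExactlyLinear (restrictY f y)).card * Fintype.card F
        ≤ (Finset.univ.filter fun y : Fin m → F =>
            MvPolynomial.eval y (MvPolynomial.coeff α P) = 0).card * Fintype.card F :=
          Nat.mul_le_mul_right _ hcard
      _ ≤ (MvPolynomial.coeff α P).totalDegree * Fintype.card F ^ m := hsz
      _ ≤ d * Fintype.card F ^ m := Nat.mul_le_mul_right _ hdeg
      _ = d * Fintype.card (Fin m → F) := by simp [Fintype.card_fun]
  exact_mod_cast hn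
end

section
/- Let F ⊆ F_q^m be a set of size at most k. Consider the distribution D_twostep on F_q^m generated by: (i) choosing a uniformly random affine (or linear) subspace s of dimension k+1 containing F, and (ii) choosing a uniformly random point x in s. Let D_unif be the uniform distribution on F_q^m. Then the total variation distance between D_twostep and D_unif is at most 1/q. -/
open Module Submodule

section Aux

variable {K : Type*} [Field K] {V : Type*} [AddCommGroup V] [Module K V]
  [FiniteDimensional K V]

lemma aux_inf_span_singleton (U : Submodule K V) {x : V} (hx : x ∉ U) :
    U ⊓ (K ∙ x) = ⊥ := by
  rw [eq_bot_iff]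
  rintro z hz
  rw [Submodule.mem_inf] at hz
  obtain ⟨hzU, hzx⟩ := hz
  obtain ⟨a, rfl⟩ := Submodule.mem_span_singleton.mp hzx
  rcases eq_or_ne a 0 with rfl | ha
  · simp
  · exact absurd (by simpa [ha] using U.smul_mem a⁻¹ hzU) hx

lemma aux_finrank_sup_span_singleton (U : Submodule K V) {x : V} (hx : x ∉ U) :
    finrank K ↥(U ⊔ K ∙ x) = finrank K U + 1 := by
  have hx0 : x ≠ 0 := fun h => hx (h ▸ U.zero_mem)
  have h := Submodule.finrank_sup_add_finrank_inf_eq U (K ∙ x)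
  rw [aux_inf_span_singleton U hx, finrank_bot, finrank_span_singleton hx0] at h
  omega

lemma aux_exists_between (U : Submodule K V) (r : ℕ) (h1 : finrank K U ≤ r)
    (h2 : r ≤ finrank K V) : ∃ W : Submodule K V, U ≤ W ∧ finrank K W = r := by
  induction r, h1 using Nat.le_induction with
  | base => exact ⟨U, le_rfl, rfl⟩
  | succ n hn ih =>
    obtain ⟨W, hUW, hWr⟩ := ih (by omega)
    have hlt : finrank K W < finrank K V := by omega
    obtain ⟨x, hx⟩ := W.exists_of_finrank_lt hlt
    have hxW : x ∉ W := by simpa using hx 1 one_ne_zero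
    exact ⟨W ⊔ K ∙ x, le_trans hUW le_sup_left,
      by rw [aux_finrank_sup_span_singleton W hxW, hWr]⟩

lemma aux_finrank_of_le {U W : Submodule K V} (h : U ≤ W) :
    finrank K W = finrank K ↥(W.map U.mkQ) + finrank K U := by
  have h1 := LinearMap.finrank_range_add_finrank_ker (U.mkQ.domRestrict W)
  rw [LinearMap.range_domRestrict, LinearMap.ker_domRestrict, Submodule.ker_mkQ] at h1
  rw [← h1]
  congr 1
  exact (Submodule.comapSubtypeEquivOfLe h).finrank_eq

noncomputable def auxEquiv (U : Submodule K V) (r : ℕ) :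
    {W : Submodule K V // finrank K ↥W = r ∧ U ≤ W} ≃
      {W' : Submodule K (V ⧸ U) // finrank K ↥W' + finrank K U = r} where
  toFun W := ⟨W.1.map U.mkQ, by rw [← aux_finrank_of_le W.2.2]; exact W.2.1⟩
  invFun W' := ⟨Submodule.comap U.mkQ W'.1, by
    have hle : U ≤ Submodule.comap U.mkQ W'.1 := le_comap_mkQ U _
    have hmap : (Submodule.comap U.mkQ W'.1).map U.mkQ = W'.1 :=
      map_comap_eq_self (by rw [Submodule.range_mkQ]; exact le_top)
    exact ⟨by rw [aux_finrank_of_le hle, hmap]; exact W'.2, hle⟩⟩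
  left_inv := fun ⟨W, hW⟩ => Subtype.ext (by
    simp only [comap_map_mkQ]; exact sup_eq_right.mpr hW.2)
  right_inv := fun ⟨W', hW'⟩ => Subtype.ext
    (map_comap_eq_self (by rw [Submodule.range_mkQ]; exact le_top))

lemma aux_card_eq {U₁ U₂ : Submodule K V} (h : finrank K U₁ = finrank K U₂) (r : ℕ) :
    Nat.card {W : Submodule K V // finrank K ↥W = r ∧ U₁ ≤ W} =
      Nat.card {W : Submodule K V // finrank K ↥W = r ∧ U₂ ≤ W} := by
  have hq : finrank K (V ⧸ U₁) = finrank K (V ⧸ U₂) := by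
    have h1 := U₁.finrank_quotient_add_finrank
    have h2 := U₂.finrank_quotient_add_finrank
    omega
  let e := LinearEquiv.ofFinrankEq (V ⧸ U₁) (V ⧸ U₂) hq
  refine Nat.card_congr ((auxEquiv U₁ r).trans (Equiv.trans ?_ (auxEquiv U₂ r).symm))
  refine Equiv.subtypeEquiv (Submodule.orderIsoMapComap e).toEquiv (fun W => ?_)
  show _ ↔ finrank K ↥((Submodule.orderIsoMapComap e) W) + _ = r
  rw [show finrank K ↥((Submodule.orderIsoMapComap e) W) = finrank K ↥W from
    LinearEquiv.finrank_map_eq e W, h]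

end Aux

set_option maxHeartbeats 1000000 in
open Classical in
/-- Let `F ⊆ F_q^m` have size at most `k`, with `m > k+1`.  Consider the
distribution on `F_q^m` obtained by first choosing a uniformly random `(k+1)`-dimensional
subspace `s` containing `F` and then a uniformly random point of `s`.  Its total variation
distance from the uniform distribution on `F_q^m` is at most `1/q`. -/
theorem twostep_subspace_point_close_to_uniform
    (F : Type*) [Field F] [Fintype F] (m k : ℕ) (hm : k + 1 < m)
    (S : Finset (Fin m → F)) (hS : S.card ≤ k)
    [Fintype (Submodule F (Fin m → F))] :
    letI subs : Finset (Submodule F (Fin m → F)) :=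
      Finset.univ.filter fun W =>
        Module.finrank F W = k + 1 ∧ ∀ x ∈ S, x ∈ W
    letI Dtwo : (Fin m → F) → ℝ := fun x =>
      (subs.card : ℝ)⁻¹ *
        ∑ W ∈ subs, (if x ∈ W then ((Nat.card W : ℝ))⁻¹ else 0)
    letI Dunif : (Fin m → F) → ℝ := fun _ => (Fintype.card (Fin m → F) : ℝ)⁻¹
    (1 / 2 : ℝ) * ∑ x : Fin m → F, |Dtwo x - Dunif x| ≤ 1 / (Fintype.card F : ℝ) := by
  set subs : Finset (Submodule F (Fin m → F)) := Finset.univ.filter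
      (fun W : Submodule F (Fin m → F) => finrank F W = k + 1 ∧ ∀ x ∈ S, x ∈ W)
      with hsubs_def
  set Dtwo : (Fin m → F) → ℝ := fun x => (subs.card : ℝ)⁻¹ *
      ∑ W ∈ subs, (if x ∈ W then ((Nat.card W : ℝ))⁻¹ else 0) with hDtwo_def0
  set Dunif : (Fin m → F) → ℝ := fun _ => (Fintype.card (Fin m → F) : ℝ)⁻¹ with hDunif_def0
  have hDtwo_def : ∀ x, Dtwo x = (subs.card : ℝ)⁻¹ *
      ∑ W ∈ subs, (if x ∈ W then ((Nat.card W : ℝ))⁻¹ else 0) := fun _ => rfl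
  have hDunif_def : ∀ x : Fin m → F, Dunif x = (Fintype.card (Fin m → F) : ℝ)⁻¹ :=
    fun _ => rfl
  set q := Fintype.card F with hq
  have hq1 : 1 < q := Fintype.one_lt_card
  have hqR : (0 : ℝ) < (q : ℝ) := by positivity
  have hqR1 : (1 : ℝ) ≤ (q : ℝ) := by exact_mod_cast hq1.le
  have hm' : finrank F (Fin m → F) = m := Module.finrank_fin_fun F
  have hqN : Fintype.card (Fin m → F) = q ^ m := by
    rw [card_eq_pow_finrank (K := F) (V := Fin m → F), hm']
  have hcardW : ∀ W : Submodule F (Fin m → F), finrank F W = k + 1 →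
      Nat.card W = q ^ (k + 1) := by
    intro W h
    rw [Nat.card_eq_fintype_card, card_eq_pow_finrank (K := F), h]
  set V : Submodule F (Fin m → F) := Submodule.span F (S : Set (Fin m → F)) with hV
  have hd : finrank F V ≤ k :=
    le_trans (by simpa [Set.finrank] using finrank_span_finset_le_card (R := F) S) hS
  have hmem : ∀ W : Submodule F (Fin m → F),
      W ∈ subs ↔ (finrank F W = k + 1 ∧ V ≤ W) := by
    intro W
    rw [hsubs_def, Finset.mem_filter]
    simp only [Finset.mem_univ, true_and]
    constructor
    · rintro ⟨h1, h2⟩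
      exact ⟨h1, Submodule.span_le.mpr fun s hs => h2 s hs⟩
    · rintro ⟨h1, h2⟩
      exact ⟨h1, fun s hs => h2 (Submodule.subset_span hs)⟩
  obtain ⟨W₀, hW₀1, hW₀2⟩ := aux_exists_between V (k + 1) (by omega) (by rw [hm']; omega)
  have hne : subs.Nonempty := ⟨W₀, (hmem W₀).mpr ⟨hW₀2, hW₀1⟩⟩
  have hcR : ((subs.card : ℝ)) ≠ 0 := by
    exact_mod_cast (Finset.card_pos.mpr hne).ne'
  set a : ℝ := ((q : ℝ) ^ (k + 1))⁻¹ with ha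
  set u : ℝ := ((q : ℝ) ^ m)⁻¹ with hu
  have hapos : (0 : ℝ) < a := by rw [ha]; positivity
  have hupos : (0 : ℝ) < u := by rw [hu]; positivity
  have hpow : (q : ℝ) ^ (k + 1) ≤ (q : ℝ) ^ m := by
    apply pow_le_pow_right₀ hqR1
    omega
  have hua : u ≤ a := by
    rw [ha, hu]
    exact inv_anti₀ (by positivity) hpow
  have hDunif_u : ∀ x : Fin m → F, Dunif x = u := by
    intro x
    rw [hDunif_def x, hqN, hu]
    push_cast
    ring
  have hcastW : ∀ W : Submodule F (Fin m → F), W ∈ subs → ((Nat.card W : ℝ))⁻¹ = a := by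
    intro W hW
    rw [hcardW W ((hmem W).mp hW).1, ha]
    push_cast
    rfl
  have hDtwoV : ∀ x ∈ V, Dtwo x = a := by
    intro x hx
    rw [hDtwo_def,
      Finset.sum_congr rfl (fun W hW => by rw [if_pos (((hmem W).mp hW).2 hx), hcastW W hW]),
      Finset.sum_const, nsmul_eq_mul, ← mul_assoc, inv_mul_cancel₀ hcR, one_mul]
  have hsum_one : ∑ x : Fin m → F, Dtwo x = 1 := by
    simp only [hDtwo_def]
    rw [← Finset.mul_sum, Finset.sum_comm]
    have inner : ∀ W ∈ subs,
        (∑ x : Fin m → F, if x ∈ W then ((Nat.card W : ℝ))⁻¹ else 0) = 1 := by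
      intro W hW
      rw [Finset.sum_ite, Finset.sum_const_zero, add_zero, Finset.sum_const, nsmul_eq_mul]
      have hcount : (Finset.univ.filter (fun x : Fin m → F => x ∈ W)).card = Nat.card W := by
        rw [Nat.card_eq_fintype_card, Fintype.card_subtype]
      rw [hcount]
      have : (Nat.card W : ℝ) ≠ 0 := by
        rw [hcardW W ((hmem W).mp hW).1]
        positivity
      field_simp
    rw [Finset.sum_congr rfl inner, Finset.sum_const, nsmul_eq_mul, mul_one,
      inv_mul_cancel₀ hcR]
  have hsum_unif : ∑ x : Fin m → F, Dunif x = 1 := by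
    rw [Finset.sum_congr rfl (fun x _ => hDunif_u x), Finset.sum_const, nsmul_eq_mul,
      Finset.card_univ, hqN, hu]
    push_cast
    field_simp
  have hcount : ∀ x : Fin m → F, x ∉ V →
      (subs.filter (fun W => x ∈ W)).card =
        Nat.card {W : Submodule F (Fin m → F) // finrank F ↥W = k + 1 ∧ (V ⊔ F ∙ x) ≤ W} := by
    intro x hx
    rw [Nat.card_eq_fintype_card, Fintype.card_subtype]
    congr 1
    rw [hsubs_def, Finset.filter_filter]
    apply Finset.filter_congr
    intro W _
    constructor
    · rintro ⟨⟨h1, h2⟩, h3⟩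
      exact ⟨h1, sup_le (Submodule.span_le.mpr fun s hs => h2 s hs)
        ((Submodule.span_singleton_le_iff_mem x W).mpr h3)⟩
    · rintro ⟨h1, h2⟩
      have hVW : V ≤ W := le_trans le_sup_left h2
      exact ⟨⟨h1, fun s hs => hVW (Submodule.subset_span hs)⟩,
        h2 (le_sup_right (a := V) (Submodule.mem_span_singleton_self x))⟩
  have hDtwoOut : ∀ x : Fin m → F, x ∉ V → Dtwo x =
      (subs.card : ℝ)⁻¹ * (a * ((subs.filter (fun W => x ∈ W)).card : ℝ)) := by
    intro x hx
    rw [hDtwo_def]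
    congr 1
    rw [Finset.sum_ite, Finset.sum_const_zero, add_zero,
      Finset.sum_congr rfl (fun W hW => hcastW W (Finset.mem_of_mem_filter W hW)),
      Finset.sum_const, nsmul_eq_mul, mul_comm]
  have hconst : ∀ x : Fin m → F, x ∉ V → ∀ y : Fin m → F, y ∉ V → Dtwo x = Dtwo y := by
    intro x hx y hy
    have hfr : finrank F ↥(V ⊔ F ∙ x) = finrank F ↥(V ⊔ F ∙ y) := by
      rw [aux_finrank_sup_span_singleton V hx, aux_finrank_sup_span_singleton V hy]
    have hcards : (subs.filter (fun W => x ∈ W)).card =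
        (subs.filter (fun W => y ∈ W)).card := by
      rw [hcount x hx, hcount y hy]
      exact aux_card_eq hfr (k + 1)
    rw [hDtwoOut x hx, hDtwoOut y hy, hcards]
  -- split the sum
  set T : Finset (Fin m → F) := Finset.univ.filter (fun z => z ∈ V) with hT
  set Tc : Finset (Fin m → F) := Finset.univ.filter (fun z => ¬ z ∈ V) with hTc
  have hsplit : ∀ f : (Fin m → F) → ℝ,
      ∑ x : Fin m → F, f x = ∑ x ∈ T, f x + ∑ x ∈ Tc, f x := by
    intro f
    rw [hT, hTc]
    exact (Finset.sum_filter_add_sum_filter_not _ _ f).symm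
  have hTcard : (T.card : ℝ) = (q : ℝ) ^ finrank F V := by
    have : T.card = Fintype.card V := by
      rw [hT, Fintype.card_subtype]
    rw [this, card_eq_pow_finrank (K := F)]
    push_cast
    rfl
  obtain ⟨x₀, hx₀⟩ : ∃ x₀ : Fin m → F, x₀ ∉ V := by
    have hlt : finrank F V < finrank F (Fin m → F) := by rw [hm']; omega
    obtain ⟨x₀, hx₀⟩ := V.exists_of_finrank_lt hlt
    exact ⟨x₀, by simpa using hx₀ 1 one_ne_zero⟩
  set c0 : ℝ := Dtwo x₀ with hc0
  have hmemT : ∀ x ∈ T, x ∈ V := fun x hx => (Finset.mem_filter.mp hx).2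
  have hmemTc : ∀ x ∈ Tc, x ∉ V := fun x hx => (Finset.mem_filter.mp hx).2
  have hsumT_abs : ∑ x ∈ T, |Dtwo x - Dunif x| = (T.card : ℝ) * (a - u) := by
    rw [Finset.sum_congr rfl (fun x hx => by
      rw [hDtwoV x (hmemT x hx), hDunif_u x, abs_of_nonneg (by linarith)]),
      Finset.sum_const, nsmul_eq_mul]
  have hsumT_val : ∑ x ∈ T, (Dtwo x - Dunif x) = (T.card : ℝ) * (a - u) := by
    rw [Finset.sum_congr rfl (fun x hx => by rw [hDtwoV x (hmemT x hx), hDunif_u x]),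
      Finset.sum_const, nsmul_eq_mul]
  have hsumTc_abs : ∑ x ∈ Tc, |Dtwo x - Dunif x| = (Tc.card : ℝ) * |c0 - u| := by
    rw [Finset.sum_congr rfl (fun x hx => by
      rw [hconst x (hmemTc x hx) x₀ hx₀, hDunif_u x, ← hc0]),
      Finset.sum_const, nsmul_eq_mul]
  have hsumTc_val : ∑ x ∈ Tc, (Dtwo x - Dunif x) = (Tc.card : ℝ) * (c0 - u) := by
    rw [Finset.sum_congr rfl (fun x hx => by
      rw [hconst x (hmemTc x hx) x₀ hx₀, hDunif_u x, ← hc0]),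
      Finset.sum_const, nsmul_eq_mul]
  have hzero : (T.card : ℝ) * (a - u) + (Tc.card : ℝ) * (c0 - u) = 0 := by
    have h1 := hsplit (fun x => Dtwo x - Dunif x)
    rw [hsumT_val, hsumTc_val] at h1
    have h2 : ∑ x : Fin m → F, (Dtwo x - Dunif x) = 0 := by
      rw [Finset.sum_sub_distrib, hsum_one, hsum_unif]
      ring
    linarith
  have hAnn : (0 : ℝ) ≤ (T.card : ℝ) * (a - u) := by
    have : (0:ℝ) ≤ (T.card : ℝ) := Nat.cast_nonneg _
    nlinarith
  have hTcabs : (Tc.card : ℝ) * |c0 - u| = (T.card : ℝ) * (a - u) := by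
    have h1 : (Tc.card : ℝ) * (c0 - u) = -((T.card : ℝ) * (a - u)) := by linarith
    calc (Tc.card : ℝ) * |c0 - u| = |(Tc.card : ℝ) * (c0 - u)| := by
          rw [abs_mul, Nat.abs_cast]
      _ = |-(((T.card : ℝ)) * (a - u))| := by rw [h1]
      _ = (T.card : ℝ) * (a - u) := by rw [abs_neg, abs_of_nonneg hAnn]
  have hfinal : (1 / 2 : ℝ) * ∑ x : Fin m → F, |Dtwo x - Dunif x|
      = (T.card : ℝ) * (a - u) := by
    rw [hsplit (fun x => |Dtwo x - Dunif x|), hsumT_abs, hsumTc_abs, hTcabs]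
    ring
  rw [hfinal]
  have hstep1 : (T.card : ℝ) * (a - u) ≤ (T.card : ℝ) * a := by
    have : (0:ℝ) ≤ (T.card : ℝ) := Nat.cast_nonneg _
    nlinarith
  have hstep2 : (T.card : ℝ) * a ≤ (q : ℝ) ^ k * a := by
    rw [hTcard]
    have : (q : ℝ) ^ finrank F V ≤ (q : ℝ) ^ k := pow_le_pow_right₀ hqR1 hd
    nlinarith
  have hstep3 : (q : ℝ) ^ k * a = 1 / (q : ℝ) := by
    rw [ha, pow_succ, mul_inv, ← mul_assoc, mul_inv_cancel₀ (by positivity), one_mul, one_div]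
  linarith
end

section
/- Let 0 ⪯ A, B, C, D ⪯ I be operators on Hilbert spaces H_A and H_B (A, B on possibly different factors as written), and let |ψ⟩ be a unit vector in H_A ⊗ H_B. Then 1 − ⟨ψ|A⊗D|ψ⟩ ≤ (1 − ⟨ψ|A⊗B|ψ⟩) + (1 − ⟨ψ|B⊗C|ψ⟩) + (1 − ⟨ψ|C⊗D|ψ⟩). -/
open Kronecker Matrix
open scoped ComplexOrder

private lemma kron_conjTranspose {I : Type*} [Fintype I] (M N : Matrix I I ℂ) :
    (M ⊗ₖ N)ᴴ = Mᴴ ⊗ₖ Nᴴ := by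
  ext ⟨i, j⟩ ⟨k, l⟩
  simp [Matrix.conjTranspose_apply, Matrix.kroneckerMap_apply, mul_comm]

private lemma sub_kron {I : Type*} [Fintype I] (A B C : Matrix I I ℂ) :
    (A - B) ⊗ₖ C = A ⊗ₖ C - B ⊗ₖ C := by
  ext ⟨i, j⟩ ⟨k, l⟩
  simp [Matrix.kroneckerMap_apply, sub_mul]

private lemma kron_sub {I : Type*} [Fintype I] (A B C : Matrix I I ℂ) :
    A ⊗ₖ (B - C) = A ⊗ₖ B - A ⊗ₖ C := by
  ext ⟨i, j⟩ ⟨k, l⟩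
  simp [Matrix.kroneckerMap_apply, mul_sub]

private lemma kron_posSemidef {I : Type*} [Fintype I] [DecidableEq I]
    {M N : Matrix I I ℂ} (hM : M.PosSemidef) (hN : N.PosSemidef) :
    (M ⊗ₖ N).PosSemidef := by
  exact hM.kronecker hN

/-- Let `0 ⪯ A, B, C, D ⪯ I` be operators and `|ψ⟩` a unit bipartite
state.  Then `1 − ⟨ψ|A⊗D|ψ⟩ ≤ (1 − ⟨ψ|A⊗B|ψ⟩) + (1 − ⟨ψ|B⊗C|ψ⟩) + (1 − ⟨ψ|C⊗D|ψ⟩)`. -/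
theorem one_sub_inner_tensor_triangle {I : Type*} [Fintype I] [DecidableEq I]
    (A B C D : Matrix I I ℂ)
    (hA : A.PosSemidef) (hA' : (1 - A).PosSemidef)
    (hB : B.PosSemidef) (hB' : (1 - B).PosSemidef)
    (hC : C.PosSemidef) (hC' : (1 - C).PosSemidef)
    (hD : D.PosSemidef) (hD' : (1 - D).PosSemidef)
    (ψ : I × I → ℂ) (hψ : star ψ ⬝ᵥ ψ = 1) :
    1 - (star ψ ⬝ᵥ (A ⊗ₖ D).mulVec ψ).re ≤
      (1 - (star ψ ⬝ᵥ (A ⊗ₖ B).mulVec ψ).re) +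
        (1 - (star ψ ⬝ᵥ (B ⊗ₖ C).mulVec ψ).re) +
          (1 - (star ψ ⬝ᵥ (C ⊗ₖ D).mulVec ψ).re) := by
  set q : Matrix (I × I) (I × I) ℂ → ℝ := fun M => (star ψ ⬝ᵥ M.mulVec ψ).re with hq
  have q_add : ∀ M N, q (M + N) = q M + q N := by
    intro M N
    simp [hq, Matrix.add_mulVec, dotProduct_add]
  have q_one : q 1 = 1 := by
    simp [hq, Matrix.one_mulVec, hψ]
  have q_nonneg : ∀ {M : Matrix (I × I) (I × I) ℂ}, M.PosSemidef → 0 ≤ q M := by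
    intro M hM
    have := hM.dotProduct_mulVec_nonneg ψ
    exact (Complex.le_def.mp this).1
  -- The key algebraic identity
  have key : (1 - A) ⊗ₖ (1 - D) + A ⊗ₖ (1 - B) + (1 - B) ⊗ₖ C + (1 - C) ⊗ₖ D
      + (1 : Matrix I I ℂ) ⊗ₖ (1 - C) + A ⊗ₖ B + B ⊗ₖ C + C ⊗ₖ D
      = 1 + 1 + A ⊗ₖ D := by
    simp only [sub_kron, kron_sub, Matrix.one_kronecker_one]
    abel
  have h1 := q_nonneg (kron_posSemidef hA' hD')
  have h2 := q_nonneg (kron_posSemidef hA hB')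
  have h3 := q_nonneg (kron_posSemidef hB' hC)
  have h4 := q_nonneg (kron_posSemidef hC' hD)
  have h5 := q_nonneg (kron_posSemidef (Matrix.PosSemidef.one) hC')
  have hkey := congrArg q key
  simp only [q_add, q_one] at hkey
  have : q (A ⊗ₖ B) + q (B ⊗ₖ C) + q (C ⊗ₖ D) ≤ 2 + q (A ⊗ₖ D) := by linarith
  simp only [hq] at this ⊢
  linarith
end

section
/- Let {M_{a,b}} be a projective measurement on a tensor product Hilbert space H_1 ⊗ H_2 (i.e., the M_{a,b} are mutually orthogonal projectors summing to the identity). Suppose that for every a the marginal M_a = Σ_b M_{a,b} factors as A_a ⊗ B_a where A_a = |ψ_a⟩⟨ψ_a| is a rank-one projector on H_1. Then for all a, b there exist projectors C_{a,b} on H_2 such that M_{a,b} = |ψ_a⟩⟨ψ_a| ⊗ C_{a,b}. -/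
open Kronecker Matrix


section aux
variable {I J : Type*} [Fintype I] [Fintype J]

lemma kron_left_cancel (ψ : I → ℂ) (hψ : star ψ ⬝ᵥ ψ = 1)
    (C C' : Matrix J J ℂ)
    (h : (Matrix.vecMulVec ψ (star ψ)) ⊗ₖ C = (Matrix.vecMulVec ψ (star ψ)) ⊗ₖ C') :
    C = C' := by
  ext j j'
  have key : ∀ i, ψ i * star (ψ i) * C j j' = ψ i * star (ψ i) * C' j j' := by
    intro i
    have := congrFun (congrFun h (i, j)) (i, j')
    simpa [Matrix.kroneckerMap_apply, Matrix.vecMulVec_apply] using this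
  have h1 : (∑ i, star (ψ i) * ψ i) = 1 := by
    simpa [dotProduct] using hψ
  calc C j j' = (∑ i, star (ψ i) * ψ i) * C j j' := by rw [h1, one_mul]
    _ = ∑ i, ψ i * star (ψ i) * C j j' := by rw [Finset.sum_mul]; exact Finset.sum_congr rfl (fun i _ => by ring)
    _ = ∑ i, ψ i * star (ψ i) * C' j j' := Finset.sum_congr rfl (fun i _ => key i)
    _ = (∑ i, star (ψ i) * ψ i) * C' j j' := by rw [Finset.sum_mul]; exact Finset.sum_congr rfl (fun i _ => by ring)
    _ = C' j j' := by rw [h1, one_mul]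

lemma vecMulVec_idem (ψ : I → ℂ) (hψ : star ψ ⬝ᵥ ψ = 1) :
    Matrix.vecMulVec ψ (star ψ) * Matrix.vecMulVec ψ (star ψ) = Matrix.vecMulVec ψ (star ψ) := by
  have h1 : (∑ i, star (ψ i) * ψ i) = 1 := by simpa [dotProduct] using hψ
  ext i i'
  simp only [Matrix.mul_apply, Matrix.vecMulVec_apply, Pi.star_apply]
  calc ∑ k, ψ i * star (ψ k) * (ψ k * star (ψ i'))
      = (∑ k, star (ψ k) * ψ k) * (ψ i * star (ψ i')) := by
        rw [Finset.sum_mul]; exact Finset.sum_congr rfl (fun k _ => by ring)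
    _ = ψ i * star (ψ i') := by rw [h1, one_mul]

lemma vecMulVec_herm (ψ : I → ℂ) :
    (Matrix.vecMulVec ψ (star ψ)).IsHermitian := by
  ext i i'
  simp [Matrix.conjTranspose_apply, Matrix.vecMulVec_apply, mul_comm]

lemma kron_conjTranspose_s13 (A : Matrix I I ℂ) (C : Matrix J J ℂ) :
    (A ⊗ₖ C)ᴴ = Aᴴ ⊗ₖ Cᴴ := by
  ext ⟨i, j⟩ ⟨i', j'⟩
  simp [Matrix.conjTranspose_apply, Matrix.kroneckerMap_apply]

lemma sandwich (ψ : I → ℂ) (B : Matrix J J ℂ) (X : Matrix (I × J) (I × J) ℂ) :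
    (Matrix.vecMulVec ψ (star ψ)) ⊗ₖ B * X * ((Matrix.vecMulVec ψ (star ψ)) ⊗ₖ B)
    = (Matrix.vecMulVec ψ (star ψ)) ⊗ₖ
      (Matrix.of fun j j' => ∑ p : I × J, ∑ q : I × J,
        star (ψ p.1) * B j p.2 * X p q * (ψ q.1 * B q.2 j')) := by
  ext ⟨i, j⟩ ⟨i', j'⟩
  simp only [Matrix.mul_apply, Matrix.kroneckerMap_apply, Matrix.vecMulVec_apply,
    Matrix.of_apply, Pi.star_apply, Finset.sum_mul, Finset.mul_sum]
  rw [Finset.sum_comm]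
  refine Finset.sum_congr rfl fun q _ => Finset.sum_congr rfl fun p _ => by ring
end aux

/-- Let `{M_{a,b}}` be a projective measurement on `H₁ ⊗ H₂` (mutually
orthogonal projectors summing to the identity).  Suppose that for every `a` the marginal
`M_a = Σ_b M_{a,b}` factors as `|ψ_a⟩⟨ψ_a| ⊗ B_a` with `|ψ_a⟩⟨ψ_a|` a rank-one projector
on `H₁`.  Then for all `a, b` there exist projectors `C_{a,b}` on `H₂` with
`M_{a,b} = |ψ_a⟩⟨ψ_a| ⊗ C_{a,b}`. -/
theorem marginal_rank_one_tensor_factorization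
    {I J α β : Type*} [Fintype I] [Fintype J] [Fintype α] [Fintype β]
    [DecidableEq I] [DecidableEq J]
    (M : α → β → Matrix (I × J) (I × J) ℂ)
    (hherm : ∀ a b, (M a b).IsHermitian)
    (hidem : ∀ a b, M a b * M a b = M a b)
    (horth : ∀ a b a' b', (a, b) ≠ (a', b') → M a b * M a' b' = 0)
    (hsum : ∑ a, ∑ b, M a b = 1)
    (ψ : α → I → ℂ) (hψ : ∀ a, star (ψ a) ⬝ᵥ ψ a = 1)
    (B : α → Matrix J J ℂ)
    (hmarg : ∀ a, ∑ b, M a b = (Matrix.vecMulVec (ψ a) (star (ψ a))) ⊗ₖ B a) :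
    ∀ a b, ∃ C : Matrix J J ℂ, C.IsHermitian ∧ C * C = C ∧
      M a b = (Matrix.vecMulVec (ψ a) (star (ψ a))) ⊗ₖ C := by
  intro a b
  set P : Matrix I I ℂ := Matrix.vecMulVec (ψ a) (star (ψ a)) with hP
  have hL : (∑ b', M a b') * M a b = M a b := by
    rw [Finset.sum_mul]
    rw [Finset.sum_eq_single b]
    · exact hidem a b
    · intro b' _ hb'
      exact horth a b' a b (by simp [hb'])
    · intro h; exact absurd (Finset.mem_univ b) h
  have hR : M a b * (∑ b', M a b') = M a b := by
    rw [Finset.mul_sum]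
    rw [Finset.sum_eq_single b]
    · exact hidem a b
    · intro b' _ hb'
      exact horth a b a b' (by simp only [ne_eq, Prod.mk.injEq, not_and]; exact fun _ h => hb' h.symm)
    · intro h; exact absurd (Finset.mem_univ b) h
  have key : M a b = (P ⊗ₖ B a) * M a b * (P ⊗ₖ B a) := by
    rw [← hmarg a, hL, hR]
  rw [sandwich] at key
  set C : Matrix J J ℂ := Matrix.of fun j j' => ∑ p : I × J, ∑ q : I × J,
      star (ψ a p.1) * (B a) j p.2 * M a b p q * (ψ a q.1 * (B a) q.2 j') with hC
  refine ⟨C, ?_, ?_, key⟩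
  · have h := (hherm a b).eq
    rw [key, kron_conjTranspose_s13, (vecMulVec_herm (ψ a)).eq] at h
    exact kron_left_cancel (ψ a) (hψ a) _ _ h
  · have h := hidem a b
    rw [key, ← Matrix.mul_kronecker_mul, vecMulVec_idem (ψ a) (hψ a)] at h
    exact kron_left_cancel (ψ a) (hψ a) _ _ h
end
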